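/- With λ, r_k, P^{ki}_a as above, the difference P^{ki}_2 - λ(r_i)·P^{ki}_1 factors as ((λ(r_k)-λ(r_i))/(r_k-r_i)) · [ λ₊''(r_i)/2 + u/((r_i-w)(r_k-w)²) ], where λ₊''(r_i) = λ''(r_i) - 2u/(r_i-w)³. -/

import Mathlib

open Finset

/-- `λ(p) = p^{n+1} + v_n p^{n-1} + ⋯ + v₂ p + v₁ + u/(p-w)`. -/
noncomputable def lam (n : ℕ) (v : ℕ → ℂ) (u w : ℂ) : ℂ → ℂ :=
  fun p => p ^ (n + 1) + (∑ i ∈ Finset.range n, v (i + 1) * p ^ i) + u / (p - w)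

/-- `λ₊(p)`: the polynomial part of `λ`. -/
noncomputable def lamPlus (n : ℕ) (v : ℕ → ℂ) : ℂ → ℂ :=
  fun p => p ^ (n + 1) + ∑ i ∈ Finset.range n, v (i + 1) * p ^ i

/-- `P₁^{ki}` evaluated at a pair of critical points `rk, ri`. -/
noncomputable def Pone (n : ℕ) (v : ℕ → ℂ) (u w rk ri : ℂ) : ℂ :=
  (iteratedDeriv 2 (lam n v u w) rk + iteratedDeriv 2 (lam n v u w) ri) / (2 * (rk - ri))
    - (rk - ri) * (rk + ri - 2 * w) * u / ((rk - w) ^ 3 * (ri - w) ^ 3)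

/-- `P₂^{ki}` evaluated at a pair of critical points `rk, ri`. -/
noncomputable def Ptwo (n : ℕ) (v : ℕ → ℂ) (u w rk ri : ℂ) : ℂ :=
  (iteratedDeriv 2 (lam n v u w) rk * lam n v u w ri
      + lam n v u w rk * iteratedDeriv 2 (lam n v u w) ri) / (2 * (rk - ri))
    - (rk + ri - 2 * w) * (lam n v u w rk * (rk - w) - lam n v u w ri * (ri - w)) * u /
        ((rk - w) ^ 3 * (ri - w) ^ 3)


set_option maxHeartbeats 4000000 in
/-- the difference `P^{ki}₂ - λ(r_i)·P^{ki}₁` factors as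
`((λ(r_k)-λ(r_i))/(r_k-r_i)) · [λ₊''(r_i)/2 + u/((r_i-w)(r_k-w)²)]`, where
`λ₊''(r_i) = λ''(r_i) - 2u/(r_i-w)³`. -/
theorem P_difference_factorization
    (n : ℕ) (v : ℕ → ℂ) (u w : ℂ) (hu : u ≠ 0)
    (rk ri : ℂ) (hki : rk ≠ ri) (hkw : rk ≠ w) (hiw : ri ≠ w)
    (hck : deriv (lam n v u w) rk = 0) (hci : deriv (lam n v u w) ri = 0) :
    Ptwo n v u w rk ri - lam n v u w ri * Pone n v u w rk ri
      = ((lam n v u w rk - lam n v u w ri) / (rk - ri)) *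
          ((iteratedDeriv 2 (lam n v u w) ri - 2 * u / (ri - w) ^ 3) / 2
            + u / ((ri - w) * (rk - w) ^ 2)) := by
  unfold Ptwo Pone
  have h1 : rk - ri ≠ 0 := sub_ne_zero.mpr hki
  have h2 : rk - w ≠ 0 := sub_ne_zero.mpr hkw
  have h3 : ri - w ≠ 0 := sub_ne_zero.mpr hiw
  generalize lam n v u w rk = A
  generalize lam n v u w ri = B
  generalize iteratedDeriv 2 (lam n v u w) rk = Sk
  generalize iteratedDeriv 2 (lam n v u w) ri = Si
  have eq1 : (Sk * B + A * Si) / (2 * (rk - ri)) - B * ((Sk + Si) / (2 * (rk - ri)))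
      = (A - B) / (rk - ri) * (Si / 2) := by
    field_simp
    ring
  have eq2 : -((rk + ri - 2 * w) * (A * (rk - w) - B * (ri - w)) * u /
        ((rk - w) ^ 3 * (ri - w) ^ 3))
      + B * ((rk - ri) * (rk + ri - 2 * w) * u / ((rk - w) ^ 3 * (ri - w) ^ 3))
      = (A - B) / (rk - ri) * (-(u / (ri - w) ^ 3) + u / ((ri - w) * (rk - w) ^ 2)) := by
    have hD : (rk - w) ^ 3 * (ri - w) ^ 3 ≠ 0 :=
      mul_ne_zero (pow_ne_zero _ h2) (pow_ne_zero _ h3)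
    have hP : (ri - w) ^ 3 ≠ 0 := pow_ne_zero _ h3
    have hQ : (ri - w) * (rk - w) ^ 2 ≠ 0 := mul_ne_zero h3 (pow_ne_zero _ h2)
    rw [← neg_div, ← mul_div_assoc, ← add_div, ← neg_div, div_add_div _ _ hP hQ,
      div_mul_div_comm, div_eq_div_iff hD (mul_ne_zero h1 (mul_ne_zero hP hQ))]
    ring
  calc (Sk * B + A * Si) / (2 * (rk - ri))
        - (rk + ri - 2 * w) * (A * (rk - w) - B * (ri - w)) * u / ((rk - w) ^ 3 * (ri - w) ^ 3)
        - B * ((Sk + Si) / (2 * (rk - ri))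
            - (rk - ri) * (rk + ri - 2 * w) * u / ((rk - w) ^ 3 * (ri - w) ^ 3))
      = ((Sk * B + A * Si) / (2 * (rk - ri)) - B * ((Sk + Si) / (2 * (rk - ri))))
        + (-((rk + ri - 2 * w) * (A * (rk - w) - B * (ri - w)) * u /
              ((rk - w) ^ 3 * (ri - w) ^ 3))
          + B * ((rk - ri) * (rk + ri - 2 * w) * u / ((rk - w) ^ 3 * (ri - w) ^ 3))) := by
        ring
    _ = (A - B) / (rk - ri) * (Si / 2)
        + (A - B) / (rk - ri) * (-(u / (ri - w) ^ 3) + u / ((ri - w) * (rk - w) ^ 2)) := by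
        rw [eq1, eq2]
    _ = (A - B) / (rk - ri) * ((Si - 2 * u / (ri - w) ^ 3) / 2 + u / ((ri - w) * (rk - w) ^ 2)) := by
        ring
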